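/- If S is a t-almost-equiangular subset of S^{n-1} with t ∈ [-1, 0] and |S| = 2(n+1), then t = -1/n. -/

import Mathlib

open scoped RealInnerProductSpace

private lemma aux_trace_mul_sum {κ : Type*} [Fintype κ] (X Y : Matrix κ κ ℝ) :
    (X * Y).trace = ∑ x, ∑ y, X x y * Y y x := by
  simp [Matrix.trace, Matrix.diag, Matrix.mul_apply]

theorem almost_equiangular_max_card_inner_eq (n : ℕ) (t : ℝ) (ht : t ∈ Set.Icc (-1 : ℝ) 0)
    (S : Finset (EuclideanSpace ℝ (Fin n)))
    (hunit : ∀ x ∈ S, ‖x‖ = 1)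
    (halmost : ∀ x ∈ S, ∀ y ∈ S, ∀ z ∈ S, x ≠ y → x ≠ z → y ≠ z →
      ⟪x, y⟫ = t ∨ ⟪x, z⟫ = t ∨ ⟪y, z⟫ = t)
    (hcard : S.card = 2 * (n + 1)) :
    t = -1 / n := by
  classical
  obtain ⟨ht1, ht2⟩ := ht
  -- dispose of the degenerate case n = 0
  rcases Nat.eq_zero_or_pos n with hn0 | hn0
  · exfalso
    have hS : S.Nonempty := by
      rw [← Finset.card_pos, hcard]; omega
    obtain ⟨x, hx⟩ := hS
    have h1 := hunit x hx
    have h0 : ‖x‖ = 0 := by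
      subst hn0
      rw [EuclideanSpace.norm_eq]; simp
    rw [h0] at h1; norm_num at h1
  have hn1 : (1 : ℝ) ≤ (n : ℝ) := by exact_mod_cast hn0
  set ι := {x // x ∈ S} with hι
  have hcardι : (Fintype.card ι : ℝ) = 2 * ((n : ℝ) + 1) := by
    rw [Fintype.card_coe, hcard]; push_cast; ring
  obtain ⟨mR, hmR⟩ : ∃ m : ℝ, m = 2 * ((n : ℝ) + 1) := by exact ⟨_, rfl⟩
  obtain ⟨β, hβ⟩ : ∃ b : ℝ, b = 1 - t := by exact ⟨_, rfl⟩
  have hmRpos : 0 < mR := by rw [hmR]; positivity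
  have hβpos : 0 < β := by rw [hβ]; linarith
  have hcardι' : (Fintype.card ι : ℝ) = mR := by rw [hmR, hcardι]
  -- inner products, as a function
  have hinner : ∀ x y : ι, ⟪(x : EuclideanSpace ℝ (Fin n)), (y : EuclideanSpace ℝ (Fin n))⟫
      = ∑ i, (x : EuclideanSpace ℝ (Fin n)) i * (y : EuclideanSpace ℝ (Fin n)) i := by
    intro x y
    simp [PiLp.inner_apply, RCLike.inner_apply, conj_trivial]
    exact Finset.sum_congr rfl fun _ _ => mul_comm _ _
  have hinnerself : ∀ x : ι,
      ⟪(x : EuclideanSpace ℝ (Fin n)), (x : EuclideanSpace ℝ (Fin n))⟫ = 1 := by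
    intro x
    rw [real_inner_self_eq_norm_mul_norm, hunit _ x.2]; norm_num
  -- the matrix A whose Gram matrix is N = G - t J
  obtain ⟨A, hA⟩ : ∃ A : Matrix (Fin n ⊕ Fin 1) ι ℝ,
      A = Matrix.of (fun i (x : ι) => Sum.elim (fun j => (x : EuclideanSpace ℝ (Fin n)) j)
        (fun _ => Real.sqrt (-t)) i) := by exact ⟨_, rfl⟩
  obtain ⟨N, hN⟩ : ∃ N : Matrix ι ι ℝ, N = Matrix.conjTranspose A * A := by exact ⟨_, rfl⟩
  have hNpsd : N.PosSemidef := hN ▸ Matrix.posSemidef_conjTranspose_mul_self A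
  have hNentry : ∀ x y : ι,
      N x y = ⟪(x : EuclideanSpace ℝ (Fin n)), (y : EuclideanSpace ℝ (Fin n))⟫ - t := by
    intro x y
    rw [hinner]
    simp only [hN, Matrix.mul_apply, Matrix.conjTranspose_apply, hA, Matrix.of_apply]
    rw [Fintype.sum_sum_type]
    simp only [Sum.elim_inl, Sum.elim_inr, star_trivial]
    rw [Real.mul_self_sqrt (by linarith : (0:ℝ) ≤ -t)]
    simp [Finset.sum_const]
    ring
  have hNsymm : ∀ x y : ι, N x y = N y x := by
    intro x y; rw [hNentry, hNentry, real_inner_comm]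
  -- the zero-diagonal part M of N
  obtain ⟨M, hM⟩ : ∃ M : Matrix ι ι ℝ, M = Matrix.of (fun x y : ι => if x = y then (0:ℝ) else
      ⟪(x : EuclideanSpace ℝ (Fin n)), (y : EuclideanSpace ℝ (Fin n))⟫ - t) := by exact ⟨_, rfl⟩
  have hMsymm : ∀ x y : ι, M x y = M y x := by
    intro x y
    simp only [hM, Matrix.of_apply]
    by_cases h : x = y
    · simp [h]
    · rw [if_neg h, if_neg (fun h' => h h'.symm), real_inner_comm]
  have hNM : N = M + β • (1 : Matrix ι ι ℝ) := by
    ext x y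
    simp only [Matrix.add_apply, Matrix.smul_apply, Matrix.one_apply, hM, Matrix.of_apply,
      hNentry, smul_eq_mul]
    by_cases h : x = y
    · subst h; rw [hinnerself]; simp [hβ]
    · simp [h]
  -- every entry-product around a triangle vanishes
  have hterm : ∀ x y z : ι, M x y * M y z * M z x = 0 := by
    intro x y z
    by_cases hxy : x = y
    · simp [hM, hxy]
    by_cases hyz : y = z
    · simp [hM, hyz]
    by_cases hzx : z = x
    · simp [hM, hzx]
    have hxy' : (x : EuclideanSpace ℝ (Fin n)) ≠ y := fun h => hxy (Subtype.coe_injective h)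
    have hxz' : (x : EuclideanSpace ℝ (Fin n)) ≠ z := fun h => hzx (Subtype.coe_injective h.symm)
    have hyz' : (y : EuclideanSpace ℝ (Fin n)) ≠ z := fun h => hyz (Subtype.coe_injective h)
    rcases halmost x x.2 y y.2 z z.2 hxy' hxz' hyz' with h | h | h
    · have h0 : M x y = 0 := by
        rw [hM]; simp only [Matrix.of_apply, if_neg hxy]; rw [h]; ring
      rw [h0]; ring
    · have h0 : M z x = 0 := by
        rw [hM]; simp only [Matrix.of_apply, if_neg hzx]; rw [real_inner_comm, h]; ring
      rw [h0]; ring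
    · have h0 : M y z = 0 := by
        rw [hM]; simp only [Matrix.of_apply, if_neg hyz]; rw [h]; ring
      rw [h0]; ring
  -- traces
  have htrM : M.trace = 0 := by
    simp [Matrix.trace, Matrix.diag, hM]
  obtain ⟨Q, hQ⟩ : ∃ q : ℝ, (M * M).trace = q := by exact ⟨_, rfl⟩
  have hQsum : Q = ∑ x, ∑ y, (M x y)^2 := by
    rw [← hQ, aux_trace_mul_sum]
    refine Finset.sum_congr rfl fun x _ => Finset.sum_congr rfl fun y _ => ?_
    rw [← hMsymm x y]; ring
  have hQ0 : 0 ≤ Q := by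
    rw [hQsum]
    exact Finset.sum_nonneg fun x _ => Finset.sum_nonneg fun y _ => sq_nonneg _
  have htrM3 : (M * M * M).trace = 0 := by
    rw [aux_trace_mul_sum]
    have h1 : ∀ x y : ι, (M * M) x y * M y x = ∑ z, M x z * M z y * M y x := by
      intro x y
      rw [Matrix.mul_apply, Finset.sum_mul]
    have h2 : ∀ x y z : ι, M x z * M z y * M y x = 0 := fun x y z => hterm x z y
    simp only [h1, h2, Finset.sum_const_zero]
  have htrone : (1 : Matrix ι ι ℝ).trace = mR := by
    rw [Matrix.trace_one, ← hcardι']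
  -- expansions of powers of N
  have hN2 : N * N = M * M + (2 * β) • M + (β ^ 2) • (1 : Matrix ι ι ℝ) := by
    rw [hNM]
    simp only [add_mul, mul_add, smul_mul_assoc, mul_smul_comm, one_mul, mul_one, smul_smul]
    module
  have hN3 : N * N * N = M * M * M + (3 * β) • (M * M) + (3 * β ^ 2) • M
      + (β ^ 3) • (1 : Matrix ι ι ℝ) := by
    rw [hN2, hNM]
    simp only [add_mul, mul_add, smul_mul_assoc, mul_smul_comm, one_mul, mul_one, smul_smul]
    module
  have hP1 : N.trace = β * mR := by
    rw [hNM, Matrix.trace_add, Matrix.trace_smul, htrM, htrone]; simp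
  have hP2 : (N * N).trace = Q + β ^ 2 * mR := by
    rw [hN2, Matrix.trace_add, Matrix.trace_add, Matrix.trace_smul, Matrix.trace_smul, htrM,
      htrone, hQ]
    simp
  have hP3 : (N * N * N).trace = 3 * β * Q + β ^ 3 * mR := by
    rw [hN3, Matrix.trace_add, Matrix.trace_add, Matrix.trace_add, Matrix.trace_smul,
      Matrix.trace_smul, Matrix.trace_smul, htrM, htrM3, htrone, hQ]
    simp
  -- Cauchy-Schwarz for traces of powers of the PSD matrix N
  have hCS : ((N * N).trace) ^ 2 ≤ N.trace * (N * N * N).trace := by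
    obtain ⟨R, hRpsd, hRR⟩ : ∃ R : Matrix ι ι ℝ, R.PosSemidef ∧ R * R = N :=
      open scoped MatrixOrder in
      ⟨CFC.sqrt N, Matrix.nonneg_iff_posSemidef.mp (CFC.sqrt_nonneg N), CFC.sqrt_mul_sqrt_self N hNpsd.nonneg⟩
    have hRsym : ∀ x y : ι, R x y = R y x := by
      intro x y
      have := hRpsd.1.apply y x
      simpa using this
    have hTsym : ∀ x y : ι, (R * R * R) x y = (R * R * R) y x := by
      have h3 : (R ^ 3).IsHermitian := hRpsd.1.pow 3
      have e : R ^ 3 = R * R * R := by rw [pow_succ, pow_succ, pow_one]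
      rw [e] at h3
      intro x y
      have := h3.apply y x
      simpa using this
    have tr1 : N.trace = ∑ x, ∑ y, (R x y) ^ 2 := by
      rw [← hRR, aux_trace_mul_sum]
      exact Finset.sum_congr rfl fun x _ => Finset.sum_congr rfl fun y _ => by
        rw [← hRsym x y]; ring
    have tr3 : (N * N * N).trace = ∑ x, ∑ y, ((R * R * R) x y) ^ 2 := by
      have e : N * N * N = (R * R * R) * (R * R * R) := by rw [← hRR]; noncomm_ring
      rw [e, aux_trace_mul_sum]
      exact Finset.sum_congr rfl fun x _ => Finset.sum_congr rfl fun y _ => by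
        rw [← hTsym x y]; ring
    have tr2 : (N * N).trace = ∑ x, ∑ y, R x y * (R * R * R) x y := by
      have e : N * N = R * (R * R * R) := by rw [← hRR]; noncomm_ring
      rw [e, aux_trace_mul_sum]
      exact Finset.sum_congr rfl fun x _ => Finset.sum_congr rfl fun y _ => by
        rw [← hTsym x y]
    have key := Finset.sum_mul_sq_le_sq_mul_sq Finset.univ
      (fun p : ι × ι => R p.1 p.2) (fun p : ι × ι => (R * R * R) p.1 p.2)
    rw [Fintype.sum_prod_type, Fintype.sum_prod_type, Fintype.sum_prod_type] at key
    rw [tr1, tr2, tr3]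
    exact key
  -- hence Q ≤ β² mR
  have hQle : Q ≤ β ^ 2 * mR := by
    rw [hP1, hP2, hP3] at hCS
    have h1 : Q ^ 2 ≤ β ^ 2 * mR * Q := by nlinarith [hCS]
    by_contra hcon
    push_neg at hcon
    have hc : 0 < β ^ 2 * mR := by positivity
    have hQpos : 0 < Q := lt_trans hc hcon
    nlinarith [mul_lt_mul_of_pos_right hcon hQpos]
  -- the all-ones quadratic form
  obtain ⟨Y, hY⟩ : ∃ y : ℝ, (∑ x : ι, ∑ y : ι, N x y) = y := by exact ⟨_, rfl⟩
  have hYge : 0 ≤ Y + t * mR ^ 2 := by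
    have h0 : (0:ℝ) ≤ ⟪∑ x : ι, (x : EuclideanSpace ℝ (Fin n)),
        ∑ x : ι, (x : EuclideanSpace ℝ (Fin n))⟫ := real_inner_self_nonneg
    have h1 : ⟪∑ x : ι, (x : EuclideanSpace ℝ (Fin n)),
        ∑ x : ι, (x : EuclideanSpace ℝ (Fin n))⟫
        = ∑ x : ι, ∑ y : ι, ⟪(x : EuclideanSpace ℝ (Fin n)), (y : EuclideanSpace ℝ (Fin n))⟫ := by
      rw [sum_inner]
      exact Finset.sum_congr rfl fun x _ => by rw [inner_sum]
    have h2 : ∀ x y : ι, ⟪(x : EuclideanSpace ℝ (Fin n)), (y : EuclideanSpace ℝ (Fin n))⟫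
        = N x y + t := by
      intro x y; rw [hNentry]; ring
    have h3 : ∑ x : ι, ∑ y : ι, ⟪(x : EuclideanSpace ℝ (Fin n)), (y : EuclideanSpace ℝ (Fin n))⟫
        = Y + mR * (mR * t) := by
      simp only [h2, Finset.sum_add_distrib, Finset.sum_const, Finset.card_univ, nsmul_eq_mul]
      rw [hY, hcardι']
    rw [h1, h3] at h0
    linarith
  have htY : t * Y ≤ -(t ^ 2 * mR ^ 2) := by
    have h := mul_nonneg (neg_nonneg.mpr ht2) hYge
    have h2 : -t * (Y + t * mR ^ 2) = -(t * Y) - t ^ 2 * mR ^ 2 := by ring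
    rw [h2] at h
    linarith
  -- the Gram matrix of the unit vectors and its rank-driven inequality
  have hGram : mR ^ 2 ≤ (n : ℝ) * ((N * N).trace + 2 * t * Y + t ^ 2 * mR ^ 2) := by
    obtain ⟨A0, hA0⟩ : ∃ A0 : Matrix (Fin n) ι ℝ,
        A0 = Matrix.of (fun i (x : ι) => (x : EuclideanSpace ℝ (Fin n)) i) := by exact ⟨_, rfl⟩
    obtain ⟨G, hG⟩ : ∃ G : Matrix ι ι ℝ, G = Matrix.conjTranspose A0 * A0 := by exact ⟨_, rfl⟩
    obtain ⟨B, hB⟩ : ∃ B : Matrix (Fin n) (Fin n) ℝ, B = A0 * Matrix.conjTranspose A0 := by exact ⟨_, rfl⟩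
    have hGentry : ∀ x y : ι, G x y = N x y + t := by
      intro x y
      rw [hNentry]
      simp only [hG, Matrix.mul_apply, Matrix.conjTranspose_apply, hA0, Matrix.of_apply,
        star_trivial]
      rw [hinner]
      ring
    have htrG : G.trace = mR := by
      have h1 : ∀ x : ι, G x x = 1 := by
        intro x
        rw [hGentry, hNentry, hinnerself]; ring
      simp only [Matrix.trace, Matrix.diag, h1, Finset.sum_const, Finset.card_univ,
        nsmul_eq_mul, mul_one]
      exact hcardι'
    have hBsym : ∀ i j, B i j = B j i := by
      intro i j
      simp only [hB, Matrix.mul_apply, Matrix.conjTranspose_apply, star_trivial]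
      exact Finset.sum_congr rfl fun x _ => mul_comm _ _
    have htrGB : G.trace = B.trace := by
      rw [hG, hB, Matrix.trace_mul_comm]
    have htrGG : (G * G).trace = (B * B).trace := by
      rw [hG, hB]
      rw [Matrix.mul_assoc (Matrix.conjTranspose A0) A0 (Matrix.conjTranspose A0 * A0)]
      rw [Matrix.trace_mul_comm]
      congr 1
      simp only [Matrix.mul_assoc]
    have hBB : (B.trace) ^ 2 ≤ (n : ℝ) * (B * B).trace := by
      have h1 : (B.trace) ^ 2 ≤ (Fintype.card (Fin n) : ℝ) * ∑ i, (B i i) ^ 2 := by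
        have h := sq_sum_le_card_mul_sum_sq (s := (Finset.univ : Finset (Fin n)))
          (f := fun i => B i i)
        simpa [Matrix.trace, Matrix.diag, Finset.card_univ] using h
      have h2 : ∑ i, (B i i) ^ 2 ≤ ∑ i, ∑ j, (B i j) ^ 2 :=
        Finset.sum_le_sum fun i _ =>
          Finset.single_le_sum (f := fun j => (B i j) ^ 2)
            (fun j _ => sq_nonneg _) (Finset.mem_univ i)
      have h3 : (B * B).trace = ∑ i, ∑ j, (B i j) ^ 2 := by
        rw [aux_trace_mul_sum]
        exact Finset.sum_congr rfl fun i _ => Finset.sum_congr rfl fun j _ => by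
          rw [← hBsym i j]; ring
      rw [h3]
      calc (B.trace) ^ 2 ≤ (Fintype.card (Fin n) : ℝ) * ∑ i, (B i i) ^ 2 := h1
        _ = (n : ℝ) * ∑ i, (B i i) ^ 2 := by rw [Fintype.card_fin]
        _ ≤ (n : ℝ) * ∑ i, ∑ j, (B i j) ^ 2 := by
            apply mul_le_mul_of_nonneg_left h2 (by positivity)
    have hGG : (G * G).trace = (N * N).trace + 2 * t * Y + t ^ 2 * mR ^ 2 := by
      have hswap : (∑ x : ι, ∑ y : ι, N y x) = Y := by
        rw [← hY]
        exact Finset.sum_comm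
      rw [aux_trace_mul_sum]
      have e1 : ∀ x y : ι, G x y * G y x
          = N x y * N y x + t * N x y + t * N y x + t * t := by
        intro x y; rw [hGentry, hGentry]; ring
      calc (∑ x, ∑ y, G x y * G y x)
          = ∑ x : ι, ∑ y : ι, (N x y * N y x + t * N x y + t * N y x + t * t) := by
            exact Finset.sum_congr rfl fun x _ => Finset.sum_congr rfl fun y _ => e1 x y
        _ = (∑ x : ι, ∑ y : ι, N x y * N y x) + t * (∑ x : ι, ∑ y : ι, N x y)
            + t * (∑ x : ι, ∑ y : ι, N y x) + mR * (mR * (t * t)) := by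
            simp only [Finset.sum_add_distrib, Finset.sum_const, Finset.card_univ, nsmul_eq_mul,
              Finset.mul_sum, hcardι']
        _ = (N * N).trace + 2 * t * Y + t ^ 2 * mR ^ 2 := by
            rw [aux_trace_mul_sum, hY, hswap]
            ring
    calc mR ^ 2 = (G.trace) ^ 2 := by rw [htrG]
      _ = (B.trace) ^ 2 := by rw [htrGB]
      _ ≤ (n : ℝ) * (B * B).trace := hBB
      _ = (n : ℝ) * (G * G).trace := by rw [htrGG]
      _ = (n : ℝ) * ((N * N).trace + 2 * t * Y + t ^ 2 * mR ^ 2) := by rw [hGG]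
  -- conclusion
  have hP2' : (N * N).trace ≤ 2 * β ^ 2 * mR := by
    rw [hP2]; linarith [hQle]
  have h5 : (N * N).trace + 2 * t * Y + t ^ 2 * mR ^ 2 ≤ 2 * β ^ 2 * mR - t ^ 2 * mR ^ 2 := by
    linarith [htY, hP2']
  have h6 : (n : ℝ) * ((N * N).trace + 2 * t * Y + t ^ 2 * mR ^ 2)
      ≤ (n : ℝ) * (2 * β ^ 2 * mR - t ^ 2 * mR ^ 2) :=
    mul_le_mul_of_nonneg_left h5 (by linarith)
  have h7 : mR ^ 2 ≤ (n : ℝ) * (2 * β ^ 2 * mR - t ^ 2 * mR ^ 2) := le_trans hGram h6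
  rw [hmR, hβ] at h7
  have hpos : (0:ℝ) < 4 * ((n:ℝ) + 1) := by linarith
  have h8 : 4 * ((n:ℝ) + 1) * ((n:ℝ) + 1)
      ≤ 4 * ((n:ℝ) + 1) * ((n:ℝ) * (1 - t) ^ 2 - (n:ℝ) * t ^ 2 * ((n:ℝ) + 1)) := by
    calc 4 * ((n:ℝ) + 1) * ((n:ℝ) + 1) = (2 * ((n:ℝ) + 1)) ^ 2 := by ring
      _ ≤ (n:ℝ) * (2 * (1 - t) ^ 2 * (2 * ((n:ℝ) + 1)) - t ^ 2 * (2 * ((n:ℝ) + 1)) ^ 2) := h7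
      _ = 4 * ((n:ℝ) + 1) * ((n:ℝ) * (1 - t) ^ 2 - (n:ℝ) * t ^ 2 * ((n:ℝ) + 1)) := by ring
  have h9 : ((n:ℝ) + 1) ≤ (n:ℝ) * (1 - t) ^ 2 - (n:ℝ) * t ^ 2 * ((n:ℝ) + 1) :=
    (mul_le_mul_iff_right₀ hpos).mp h8
  have hkey : (1 + (n : ℝ) * t) ^ 2 ≤ 0 := by
    have hid : (1 + (n:ℝ) * t) ^ 2
        = ((n:ℝ) + 1) - ((n:ℝ) * (1 - t) ^ 2 - (n:ℝ) * t ^ 2 * ((n:ℝ) + 1)) := by ring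
    rw [hid]
    linarith
  have h0 : 1 + (n : ℝ) * t = 0 :=
    pow_eq_zero_iff two_ne_zero |>.mp (le_antisymm hkey (sq_nonneg _))
  have hnne : (n : ℝ) ≠ 0 := by linarith
  field_simp
  linarith
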